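/- For the lemniscatic sine sl = sin_{2,4} and lemniscatic cosine cl = cos_{2,4}, the addition formula sl(x + y) = (sl(x)cl(y) + sl(y)cl(x)) / (1 + sl(x)² sl(y)²) holds for all x, y with x, y, x+y in [0, π_{2,4}/2]. -/

import Mathlib

open MeasureTheory Set Topology

noncomputable def F24 (x : ℝ) : ℝ := ∫ t in (0:ℝ)..x, (1 - t ^ 4) ^ (-(1/2 : ℝ))

lemma pow4_lt_one {s : ℝ} (h0 : -1 < s) (h1 : s < 1) : s ^ 4 < 1 := by
  have h2 : s ^ 2 < 1 := by nlinarith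
  nlinarith [sq_nonneg s]

lemma f24_contAt {s : ℝ} (h : s ^ 4 < 1) :
    ContinuousAt (fun t : ℝ => (1 - t ^ 4) ^ (-(1/2 : ℝ))) s := by
  apply ContinuousAt.rpow_const (by fun_prop)
  left; simp only [ne_eq, sub_eq_zero]; intro hc; nlinarith

lemma F24_hasDerivAt {s : ℝ} (h0 : 0 ≤ s) (h1 : s < 1) :
    HasDerivAt F24 ((1 - s ^ 4) ^ (-(1/2 : ℝ))) s := by
  apply intervalIntegral.integral_hasDerivAt_right
  · apply ContinuousOn.intervalIntegrable
    intro t ht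
    rw [uIcc_of_le h0] at ht
    exact (f24_contAt (pow4_lt_one (by linarith [ht.1]) (by linarith [ht.2]))).continuousWithinAt
  · refine ContinuousAt.stronglyMeasurableAtFilter (isOpen_Ioo (a := (-1:ℝ)) (b := 1)) ?_ s
      ⟨by linarith, h1⟩
    intro u hu
    exact f24_contAt (pow4_lt_one hu.1 hu.2)
  · exact f24_contAt (pow4_lt_one (by linarith) h1)

/-- the lemniscatic addition formula
`sl(x+y) = (sl x · cl y + sl y · cl x) / (1 + sl x ² sl y ²)` for `x, y, x+y ∈ [0, π_{2,4}/2]`,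
where `sl = sin_{2,4}` is the inverse of `F_{2,4}` and `cl = cos_{2,4}` its derivative. -/
theorem stmt_4 (sl cl : ℝ → ℝ)
    (hmap : MapsTo sl (Icc 0 (F24 1)) (Icc 0 1))
    (hinv : InvOn sl F24 (Icc 0 1) (Icc 0 (F24 1)))
    (hderiv : ∀ x ∈ Icc 0 (F24 1), HasDerivWithinAt sl (cl x) (Icc 0 (F24 1)) x) :
    ∀ x ∈ Icc 0 (F24 1), ∀ y ∈ Icc 0 (F24 1), x + y ∈ Icc 0 (F24 1) →
      sl (x + y) = (sl x * cl y + sl y * cl x) / (1 + (sl x) ^ 2 * (sl y) ^ 2) := by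
  have hF0 : F24 0 = 0 := by simp [F24]
  have hsl0 : sl 0 = 0 := by
    have := hinv.1 (⟨le_refl _, zero_le_one⟩ : (0:ℝ) ∈ Icc (0:ℝ) 1)
    rwa [hF0] at this
  intro x hx y hy hxy
  by_cases hL : F24 1 ≤ 0
  · have hx0 : x = 0 := le_antisymm (le_trans hx.2 hL) hx.1
    have hy0 : y = 0 := le_antisymm (le_trans hy.2 hL) hy.1
    subst hx0; subst hy0; simp [hsl0]
  push_neg at hL
  set L := F24 1 with hLdef
  -- sl t < 1 for t < L
  have hlt1 : ∀ t ∈ Icc 0 L, t < L → sl t < 1 := by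
    intro t ht htL
    rcases lt_or_eq_of_le (hmap ht).2 with h | h
    · exact h
    · exfalso
      have h2 := hinv.2 ht
      rw [h] at h2
      rw [← hLdef] at h2  -- F24 1 = t
      exact absurd h2 (ne_of_gt htL)
  -- cl formula
  have hcl : ∀ t ∈ Icc 0 L, t < L → cl t = Real.sqrt (1 - sl t ^ 4) := by
    intro t ht htL
    have hs0 : 0 ≤ sl t := (hmap ht).1
    have hs1 : sl t < 1 := hlt1 t ht htL
    have hP : 0 < 1 - sl t ^ 4 := by
      have := pow4_lt_one (by linarith : (-1:ℝ) < sl t) hs1; linarith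
    have hF' := F24_hasDerivAt hs0 hs1
    have hcomp := hF'.comp_hasDerivWithinAt t (hderiv t ht)
    have hid : HasDerivWithinAt (id : ℝ → ℝ)
        ((1 - sl t ^ 4) ^ (-(1/2 : ℝ)) * cl t) (Icc 0 L) t :=
      hcomp.congr (fun u hu => (hinv.2 hu).symm) (hinv.2 ht).symm
    have hud : UniqueDiffWithinAt ℝ (Icc 0 L) t := (uniqueDiffOn_Icc hL) t ht
    have h1 : (1 - sl t ^ 4) ^ (-(1/2 : ℝ)) * cl t = 1 := by
      have ha := hid.derivWithin hud
      have hb := (hasDerivWithinAt_id t (Icc 0 L)).derivWithin hud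
      rw [ha] at hb; exact hb
    have hrp : (1 - sl t ^ 4) ^ (-(1/2 : ℝ)) = (Real.sqrt (1 - sl t ^ 4))⁻¹ := by
      rw [Real.sqrt_eq_rpow]
      exact Real.rpow_neg hP.le _
    rw [hrp] at h1
    have hsq : 0 < Real.sqrt (1 - sl t ^ 4) := Real.sqrt_pos.mpr hP
    field_simp at h1
    linarith
  have hScont : ContinuousOn sl (Icc 0 L) := fun t ht => (hderiv t ht).continuousWithinAt
  have hcl0 : cl 0 = 1 := by
    rw [hcl 0 ⟨le_refl _, hL.le⟩ hL, hsl0]; norm_num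
  by_cases hx0 : x = 0
  · subst hx0
    simp [hsl0, hcl0]
  by_cases hy0 : y = 0
  · subst hy0
    simp [hsl0, hcl0]
  have hx' : 0 < x := lt_of_le_of_ne hx.1 (Ne.symm hx0)
  have hy' : 0 < y := lt_of_le_of_ne hy.1 (Ne.symm hy0)
  set s := x + y with hsdef
  have hsL : s ≤ L := hxy.2
  have hxs : x < s := by simp [hsdef]; linarith
  -- interior derivative facts
  have hDq : ∀ t ∈ Ioo 0 L, HasDerivAt sl (Real.sqrt (1 - sl t ^ 4)) t ∧
      HasDerivAt (fun w => Real.sqrt (1 - sl w ^ 4)) (-2 * sl t ^ 3) t := by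
    intro t ht
    have ht' : t ∈ Icc 0 L := Ioo_subset_Icc_self ht
    have hnb : Icc 0 L ∈ 𝓝 t := Icc_mem_nhds ht.1 ht.2
    have hS : HasDerivAt sl (cl t) t := (hderiv t ht').hasDerivAt hnb
    rw [hcl t ht' ht.2] at hS
    refine ⟨hS, ?_⟩
    have hs0 : 0 ≤ sl t := (hmap ht').1
    have hs1 : sl t < 1 := hlt1 t ht' ht.2
    have hP : 0 < 1 - sl t ^ 4 := by
      have := pow4_lt_one (by linarith : (-1:ℝ) < sl t) hs1; linarith
    have hin : HasDerivAt (fun w => 1 - sl w ^ 4)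
        (0 - (4 : ℕ) * sl t ^ (4 - 1) * Real.sqrt (1 - sl t ^ 4)) t :=
      (hasDerivAt_const t (1:ℝ)).sub (hS.pow 4)
    have hout := (Real.hasDerivAt_sqrt hP.ne').comp t hin
    have hsqpos : 0 < Real.sqrt (1 - sl t ^ 4) := Real.sqrt_pos.mpr hP
    refine hout.congr_deriv ?_
    push_cast
    field_simp
    ring
  have hs_eq : s = x + y := hsdef
  have hyL : y < L := by linarith
  have hxL : x < L := lt_of_lt_of_le hxs hsL
  have hsubmem : ∀ t ∈ Icc x s, s - t ∈ Icc 0 L := by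
    intro t ht
    exact ⟨by linarith [ht.2], by linarith [ht.1]⟩
  have hIccsub : Icc x s ⊆ Icc 0 L := fun t ht => ⟨le_trans hx.1 ht.1, le_trans ht.2 hsL⟩
  have hqcont : ContinuousOn (fun w => Real.sqrt (1 - sl w ^ 4)) (Icc 0 L) :=
    Real.continuous_sqrt.comp_continuousOn (continuousOn_const.sub (hScont.pow 4))
  have hmaps : MapsTo (fun t => s - t) (Icc x s) (Icc 0 L) := hsubmem
  have hc1 : ContinuousOn sl (Icc x s) := hScont.mono hIccsub
  have hc2 : ContinuousOn (fun t => sl (s - t)) (Icc x s) :=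
    hScont.comp (continuous_const.sub continuous_id).continuousOn hmaps
  have hc3 : ContinuousOn (fun t => Real.sqrt (1 - sl (s - t) ^ 4)) (Icc x s) :=
    hqcont.comp (continuous_const.sub continuous_id).continuousOn hmaps
  have hc4 : ContinuousOn (fun w => Real.sqrt (1 - sl w ^ 4)) (Icc x s) := hqcont.mono hIccsub
  have hgcont : ContinuousOn (fun w => (sl w * Real.sqrt (1 - sl (s - w) ^ 4) +
      sl (s - w) * Real.sqrt (1 - sl w ^ 4)) / (1 + sl w ^ 2 * sl (s - w) ^ 2)) (Icc x s) := by
    apply ContinuousOn.div ((hc1.mul hc3).add (hc2.mul hc4))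
      (continuousOn_const.add ((hc1.pow 2).mul (hc2.pow 2)))
    intro t ht
    have h1 : 0 ≤ sl t ^ 2 * sl (s - t) ^ 2 := by positivity
    intro hc; simp only [Pi.add_apply, Pi.mul_apply, Pi.pow_apply] at hc; nlinarith
  have hgder : ∀ t ∈ Ico x s, HasDerivWithinAt (fun w => (sl w * Real.sqrt (1 - sl (s - w) ^ 4) +
      sl (s - w) * Real.sqrt (1 - sl w ^ 4)) / (1 + sl w ^ 2 * sl (s - w) ^ 2)) 0 (Ici t) t := by
    intro t ht
    have ht1 : t ∈ Ioo 0 L := ⟨lt_of_lt_of_le hx' ht.1, lt_of_lt_of_le ht.2 hsL⟩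
    have hu1 : s - t ∈ Ioo 0 L := ⟨by linarith [ht.2], by linarith [ht.1]⟩
    obtain ⟨hS1, hq1⟩ := hDq t ht1
    obtain ⟨hS2, hq2⟩ := hDq (s - t) hu1
    have hneg : HasDerivAt (fun w : ℝ => s - w) (-1) t := by
      have h := (hasDerivAt_const t s).sub (hasDerivAt_id t); simp only [zero_sub] at h; exact h
    have hS2' : HasDerivAt (fun w => sl (s - w)) (Real.sqrt (1 - sl (s - t) ^ 4) * -1) t := by
      have := hS2.comp t hneg; simpa [Function.comp_def] using this
    have hq2' : HasDerivAt (fun w => Real.sqrt (1 - sl (s - w) ^ 4))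
        ((-2 * sl (s - t) ^ 3) * -1) t := by
      have := hq2.comp t hneg; simpa [Function.comp_def] using this
    have hN := (hS1.mul hq2').add (hS2'.mul hq1)
    have hD := (hasDerivAt_const t (1:ℝ)).add ((hS1.pow 2).mul (hS2'.pow 2))
    have hPt : 0 < 1 - sl t ^ 4 := by
      have h0 : 0 ≤ sl t := (hmap (Ioo_subset_Icc_self ht1)).1
      have h1 : sl t < 1 := hlt1 t (Ioo_subset_Icc_self ht1) ht1.2
      have := pow4_lt_one (by linarith : (-1:ℝ) < sl t) h1; linarith
    have hPu : 0 < 1 - sl (s - t) ^ 4 := by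
      have h0 : 0 ≤ sl (s - t) := (hmap (Ioo_subset_Icc_self hu1)).1
      have h1 : sl (s - t) < 1 := hlt1 (s - t) (Ioo_subset_Icc_self hu1) hu1.2
      have := pow4_lt_one (by linarith : (-1:ℝ) < sl (s - t)) h1; linarith
    have hp2 : Real.sqrt (1 - sl t ^ 4) ^ 2 = 1 - sl t ^ 4 := Real.sq_sqrt hPt.le
    have hr2 : Real.sqrt (1 - sl (s - t) ^ 4) ^ 2 = 1 - sl (s - t) ^ 4 := Real.sq_sqrt hPu.le
    have hne : (1 : ℝ) + sl t ^ 2 * sl (s - t) ^ 2 ≠ 0 := by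
      have h1 : 0 ≤ sl t ^ 2 * sl (s - t) ^ 2 := by positivity
      intro hc; nlinarith
    have hg := hN.div hD hne
    have hg0 : HasDerivAt (fun w => (sl w * Real.sqrt (1 - sl (s - w) ^ 4) +
        sl (s - w) * Real.sqrt (1 - sl w ^ 4)) / (1 + sl w ^ 2 * sl (s - w) ^ 2)) 0 t := by
      refine hg.congr_deriv ?_
      simp only [Pi.add_apply, Pi.mul_apply, Pi.pow_apply]
      rw [div_eq_zero_iff]
      left
      push_cast
      linear_combination (-(2 * sl t * sl (s - t) ^ 3)) * hp2 + (2 * sl t ^ 3 * sl (s - t)) * hr2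
    exact hg0.hasDerivWithinAt
  have hconst := constant_of_has_deriv_right_zero hgcont hgder
  have hgs := hconst s (right_mem_Icc.mpr hxs.le)
  have hsx : s - x = y := by rw [hs_eq]; ring
  have hgs_val : (sl s * Real.sqrt (1 - sl (s - s) ^ 4) +
      sl (s - s) * Real.sqrt (1 - sl s ^ 4)) / (1 + sl s ^ 2 * sl (s - s) ^ 2) = sl s := by
    rw [sub_self, hsl0]
    norm_num
  rw [hgs_val] at hgs
  rw [hgs, hsx, hcl x ⟨hx.1, hx.2⟩ hxL, hcl y hy hyL]
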